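/- Let {S_y : y ∈ Y} be a product r.c.p. of R with respect to Q, and let ρ be a lifting on the complete probability space (Y,𝔅,Q). Suppose condition (IT) holds: whenever R(A×B) = 0 for A ∈ 𝔄, B ∈ 𝔅, either Q(B) = 0 or S_y(A) = 0 for all y ∈ ρ(B). Then S_y ≪ P for every y ∈ Y. -/
import Mathlib


open MeasureTheory Set

/-- A lifting on the probability space given by `Q`. -/
def IsLifting {Y : Type*} [MeasurableSpace Y] (Q : Measure Y) (ρ : Set Y → Set Y) : Prop :=
  (∀ B, MeasurableSet B → MeasurableSet (ρ B) ∧ Q (symmDiff B (ρ B)) = 0) ∧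
  (∀ B B', MeasurableSet B → MeasurableSet B' → Q (symmDiff B B') = 0 → ρ B = ρ B') ∧
  ρ ∅ = ∅ ∧ ρ Set.univ = Set.univ ∧
  (∀ B B', MeasurableSet B → MeasurableSet B' → ρ (B ∩ B') = ρ B ∩ ρ B') ∧
  (∀ B, MeasurableSet B → ρ Bᶜ = (ρ B)ᶜ)

theorem stmt3 {X Y : Type*} [MeasurableSpace X] [MeasurableSpace Y]
    (P : Measure X) (Q : Measure Y) (R : Measure (X × Y))
    [IsProbabilityMeasure P] [IsProbabilityMeasure Q] [IsProbabilityMeasure R]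
    [Q.IsComplete]
    (hP : R.map Prod.fst = P) (hQ : R.map Prod.snd = Q)
    (S : Y → Measure X) (hSprob : ∀ y, IsProbabilityMeasure (S y))
    (hSmeas : ∀ A : Set X, MeasurableSet A → Measurable fun y => S y A)
    (hSdis : ∀ (A : Set X) (B : Set Y), MeasurableSet A → MeasurableSet B →
      R (A ×ˢ B) = ∫⁻ y in B, S y A ∂Q)
    (ρ : Set Y → Set Y) (hρ : IsLifting Q ρ)
    (hIT : ∀ (A : Set X) (B : Set Y), MeasurableSet A → MeasurableSet B →
      R (A ×ˢ B) = 0 → Q B = 0 ∨ ∀ y ∈ ρ B, S y A = 0) :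
    ∀ y, S y ≪ P := by
  obtain ⟨-, -, -, hρuniv, -, -⟩ := hρ
  intro y s hs
  have key : ∀ A : Set X, MeasurableSet A → P A = 0 → S y A = 0 := by
    intro A hA hPA
    have hR : R (A ×ˢ (Set.univ : Set Y)) = 0 := by
      have hset : A ×ˢ (Set.univ : Set Y) = Prod.fst ⁻¹' A := by
        ext p; simp [Set.mem_prod]
      rw [hset, ← Measure.map_apply measurable_fst hA, hP]
      exact hPA
    rcases hIT A Set.univ hA MeasurableSet.univ hR with h | h
    · simp [measure_univ] at h
    · exact h y (by rw [hρuniv]; trivial)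
  have h2 := key (toMeasurable P s) (measurableSet_toMeasurable P s)
    (by rwa [measure_toMeasurable])
  exact measure_mono_null (subset_toMeasurable P s) h2
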